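/- The function f(ν) = Σ_{i∈Z̄} p_i log(ν − V_i) + log(Σ_{i∈Z̄} p_i/(ν − V_i)) is convex on (max_{i∈Z̄} V_i, ∞). -/

import Mathlib

open Finset

/-- The function f is convex on (max_{i ∈ Z̄} V i, ∞). -/
theorem f_convexOn (n : ℕ) (p V : Fin n → ℝ)
    (hp0 : ∀ i, 0 ≤ p i) (hp1 : ∑ i, p i = 1) :
    ConvexOn ℝ {ν : ℝ | ∀ i, 0 < p i → V i < ν}
      (fun ν => (∑ i ∈ univ.filter (fun i => 0 < p i), p i * Real.log (ν - V i))
        + Real.log (∑ i ∈ univ.filter (fun i => 0 < p i), p i / (ν - V i))) := by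
  classical
  set s : Finset (Fin n) := univ.filter (fun i => 0 < p i) with hs
  set D : Set ℝ := {ν : ℝ | ∀ i, 0 < p i → V i < ν} with hD
  have hmem : ∀ i, i ∈ s ↔ 0 < p i := by intro i; simp [hs]
  have hsum : ∑ i ∈ s, p i = 1 := by
    rw [hs, Finset.sum_filter, ← hp1]
    refine Finset.sum_congr rfl fun i _ => ?_
    split_ifs with h
    · rfl
    · exact (le_antisymm (hp0 i) (not_lt.mp h))
  have hsne : s.Nonempty := by
    rcases Finset.eq_empty_or_nonempty s with h | h
    · rw [h] at hsum; simp at hsum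
    · exact h
  have hpos : ∀ ν ∈ D, ∀ i ∈ s, 0 < ν - V i := by
    intro ν hν i hi
    exact sub_pos.2 (hν i ((hmem i).1 hi))
  set S1 : ℝ → ℝ := fun ν => ∑ i ∈ s, p i / (ν - V i) with hS1
  set S2 : ℝ → ℝ := fun ν => ∑ i ∈ s, p i / (ν - V i) ^ 2 with hS2
  set S3 : ℝ → ℝ := fun ν => ∑ i ∈ s, p i / (ν - V i) ^ 3 with hS3
  have hS1pos : ∀ ν ∈ D, 0 < S1 ν := fun ν hν =>
    Finset.sum_pos (fun i hi => div_pos ((hmem i).1 hi) (hpos ν hν i hi)) hsne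
  have hS2pos : ∀ ν ∈ D, 0 < S2 ν := fun ν hν =>
    Finset.sum_pos (fun i hi => div_pos ((hmem i).1 hi) (pow_pos (hpos ν hν i hi) 2)) hsne
  have hS3pos : ∀ ν ∈ D, 0 < S3 ν := fun ν hν =>
    Finset.sum_pos (fun i hi => div_pos ((hmem i).1 hi) (pow_pos (hpos ν hν i hi) 3)) hsne
  have hDeq : D = ⋂ i : Fin n, {ν : ℝ | 0 < p i → V i < ν} := by
    ext ν; simp [hD, Set.mem_iInter]
  have hDopen : IsOpen D := by
    rw [hDeq]
    refine isOpen_iInter_of_finite fun i => ?_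
    by_cases h : 0 < p i
    · have : {ν : ℝ | 0 < p i → V i < ν} = Set.Ioi (V i) := by ext ν; simp [h]
      rw [this]; exact isOpen_Ioi
    · have : {ν : ℝ | 0 < p i → V i < ν} = Set.univ := by ext ν; simp [h]
      rw [this]; exact isOpen_univ
  have hDconv : Convex ℝ D := by
    rw [hDeq]
    refine convex_iInter fun i => ?_
    by_cases h : 0 < p i
    · have : {ν : ℝ | 0 < p i → V i < ν} = Set.Ioi (V i) := by ext ν; simp [h]
      rw [this]; exact convex_Ioi _
    · have : {ν : ℝ | 0 < p i → V i < ν} = Set.univ := by ext ν; simp [h]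
      rw [this]; exact convex_univ
  have hint : interior D = D := hDopen.interior_eq
  -- derivatives of the basic sums
  have hS1d : ∀ ν ∈ D, HasDerivAt S1 (-(S2 ν)) ν := by
    intro ν hν
    have h : HasDerivAt (fun x : ℝ => ∑ i ∈ s, p i / (x - V i))
        (∑ i ∈ s, -(p i / (ν - V i) ^ 2)) ν := by
      refine HasDerivAt.fun_sum fun i hi => ?_
      have hne : ν - V i ≠ 0 := (hpos ν hν i hi).ne'
      have hsub : HasDerivAt (fun x : ℝ => x - V i) 1 ν := (hasDerivAt_id ν).sub_const _
      have := (hsub.inv hne).const_mul (p i)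
      refine HasDerivAt.congr_deriv this ?_
      field_simp
    have : HasDerivAt S1 (∑ i ∈ s, -(p i / (ν - V i) ^ 2)) ν := h
    refine HasDerivAt.congr_deriv this ?_
    rw [hS2]; simp [Finset.sum_neg_distrib]
  have hS2d : ∀ ν ∈ D, HasDerivAt S2 (-2 * S3 ν) ν := by
    intro ν hν
    have h : HasDerivAt (fun x : ℝ => ∑ i ∈ s, p i / (x - V i) ^ 2)
        (∑ i ∈ s, -2 * (p i / (ν - V i) ^ 3)) ν := by
      refine HasDerivAt.fun_sum fun i hi => ?_
      have hne : ν - V i ≠ 0 := (hpos ν hν i hi).ne'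
      have hsub : HasDerivAt (fun x : ℝ => x - V i) 1 ν := (hasDerivAt_id ν).sub_const _
      have hpow : HasDerivAt (fun x : ℝ => (x - V i) ^ 2) (2 * (ν - V i)) ν := by
        exact HasDerivAt.congr_deriv (hsub.pow 2) (by simp)
      have := (hpow.inv (pow_ne_zero 2 hne)).const_mul (p i)
      refine HasDerivAt.congr_deriv this ?_
      field_simp
    have : HasDerivAt S2 (∑ i ∈ s, -2 * (p i / (ν - V i) ^ 3)) ν := h
    refine HasDerivAt.congr_deriv this ?_
    rw [hS3, ← Finset.mul_sum]
  have hfd : ∀ ν ∈ D,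
      HasDerivAt (fun ν => (∑ i ∈ s, p i * Real.log (ν - V i))
        + Real.log (∑ i ∈ s, p i / (ν - V i))) (S1 ν - S2 ν / S1 ν) ν := by
    intro ν hν
    have h1 : HasDerivAt (fun x : ℝ => ∑ i ∈ s, p i * Real.log (x - V i)) (S1 ν) ν := by
      have h : HasDerivAt (fun x : ℝ => ∑ i ∈ s, p i * Real.log (x - V i))
          (∑ i ∈ s, p i / (ν - V i)) ν := by
        refine HasDerivAt.fun_sum fun i hi => ?_
        have hne : ν - V i ≠ 0 := (hpos ν hν i hi).ne'
        have hsub : HasDerivAt (fun x : ℝ => x - V i) 1 ν := (hasDerivAt_id ν).sub_const _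
        have := (hsub.log hne).const_mul (p i)
        refine HasDerivAt.congr_deriv this ?_
        field_simp
      exact h
    have h2 : HasDerivAt (fun x : ℝ => Real.log (∑ i ∈ s, p i / (x - V i)))
        (-(S2 ν) / S1 ν) ν := by
      have hbase : HasDerivAt (fun x : ℝ => ∑ i ∈ s, p i / (x - V i)) (-(S2 ν)) ν := hS1d ν hν
      exact hbase.log (hS1pos ν hν).ne'
    have := h1.add h2
    refine HasDerivAt.congr_deriv this ?_
    ring
  have hf'd : ∀ ν ∈ D,
      HasDerivAt (fun x => S1 x - S2 x / S1 x)
        (-(S2 ν) + (2 * S1 ν * S3 ν - (S2 ν) ^ 2) / (S1 ν) ^ 2) ν := by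
    intro ν hν
    have hdiv : HasDerivAt (fun x => S2 x / S1 x)
        ((-2 * S3 ν * S1 ν - S2 ν * (-(S2 ν))) / (S1 ν) ^ 2) ν :=
      (hS2d ν hν).div (hS1d ν hν) (hS1pos ν hν).ne'
    have := (hS1d ν hν).sub hdiv
    refine HasDerivAt.congr_deriv this ?_
    have hne : (S1 ν) ≠ 0 := (hS1pos ν hν).ne'
    field_simp
    ring
  -- Cauchy-Schwarz inequalities
  have hCS1 : ∀ ν ∈ D, (S2 ν) ^ 2 ≤ S1 ν * S3 ν := by
    intro ν hν
    refine Finset.sum_sq_le_sum_mul_sum_of_sq_eq_mul s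
      (f := fun i => p i / (ν - V i)) (g := fun i => p i / (ν - V i) ^ 3)
      (r := fun i => p i / (ν - V i) ^ 2) ?_ ?_ ?_
    · exact fun i hi => (div_pos ((hmem i).1 hi) (hpos ν hν i hi)).le
    · exact fun i hi => (div_pos ((hmem i).1 hi) (pow_pos (hpos ν hν i hi) 3)).le
    · intro i hi
      have hne : ν - V i ≠ 0 := (hpos ν hν i hi).ne'
      field_simp
  have hCS2 : ∀ ν ∈ D, (S1 ν) ^ 2 ≤ S2 ν := by
    intro ν hν
    have h := Finset.sum_sq_le_sum_mul_sum_of_sq_eq_mul s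
      (f := fun i => p i) (g := fun i => p i / (ν - V i) ^ 2)
      (r := fun i => p i / (ν - V i))
      (fun i hi => hp0 i)
      (fun i hi => (div_pos ((hmem i).1 hi) (pow_pos (hpos ν hν i hi) 2)).le)
      (fun i hi => by
        have hne : ν - V i ≠ 0 := (hpos ν hν i hi).ne'
        field_simp)
    rwa [hsum, one_mul] at h
  -- conclude
  refine convexOn_of_hasDerivWithinAt2_nonneg hDconv
    (f' := fun ν => S1 ν - S2 ν / S1 ν)
    (f'' := fun ν => -(S2 ν) + (2 * S1 ν * S3 ν - (S2 ν) ^ 2) / (S1 ν) ^ 2)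
    ?_ ?_ ?_ ?_
  · intro x hx
    exact (hfd x hx).continuousAt.continuousWithinAt
  · intro x hx
    exact (hfd x (hint ▸ hx)).hasDerivWithinAt
  · intro x hx
    exact (hf'd x (hint ▸ hx)).hasDerivWithinAt
  · intro x hx
    rw [hint] at hx
    have ha := hS1pos x hx
    have hb := hS2pos x hx
    have hc := hS3pos x hx
    have h1 := hCS1 x hx
    have h2 := hCS2 x hx
    have key : S2 x * (S1 x) ^ 2 + (S2 x) ^ 2 ≤ 2 * S1 x * S3 x := by
      nlinarith [mul_le_mul_of_nonneg_left h2 hb.le]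
    have hdiv : S2 x ≤ (2 * S1 x * S3 x - (S2 x) ^ 2) / (S1 x) ^ 2 := by
      rw [le_div_iff₀ (by positivity)]
      linarith
    linarith
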